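/- For a recurrent configuration z : {1,…,L} → {0,1,2}, in every suffix the number of 2's is at least the number of 0's: for every x ∈ {1,…,L}, |{y ∈ {x,…,L} : z(y)=2}| ≥ |{y ∈ {x,…,L} : z(y)=0}|. -/

import Mathlib

def Recurrent {L : ℕ} (z : Fin L → Fin 3) : Prop :=
  ∀ x, z x = 0 → ∃ x', x < x' ∧ z x' = 2 ∧ ∀ y, x < y → y < x' → z y = 1

theorem suffix_twos_ge_zeros {L : ℕ} (z : Fin L → Fin 3) (hz : Recurrent z) :
    ∀ x : Fin L,
      (Finset.univ.filter (fun y : Fin L => x ≤ y ∧ z y = 0)).card ≤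
      (Finset.univ.filter (fun y : Fin L => x ≤ y ∧ z y = 2)).card := by
  classical
  intro x
  set f : Fin L → Fin L := fun y => if h : z y = 0 then (hz y h).choose else y with hf
  have key : ∀ y, z y = 0 → y < f y ∧ z (f y) = 2 ∧ ∀ w, y < w → w < f y → z w = 1 := by
    intro y h
    simp only [hf, dif_pos h]
    exact (hz y h).choose_spec
  apply Finset.card_le_card_of_injOn f
  · intro y hy
    simp only [Finset.mem_filter, Finset.mem_univ, true_and, Finset.mem_coe] at hy ⊢
    obtain ⟨hlt, h2, _⟩ := key y hy.2
    exact ⟨le_of_lt (lt_of_le_of_lt hy.1 hlt), h2⟩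
  · intro y1 h1 y2 h2 heq
    simp only [Finset.mem_filter, Finset.mem_univ, true_and, Finset.mem_coe] at h1 h2
    by_contra hne
    rcases lt_or_gt_of_ne hne with hlt | hlt
    · obtain ⟨ha, hb, hc⟩ := key y1 h1.2
      obtain ⟨ha', _, _⟩ := key y2 h2.2
      have := hc y2 hlt (heq ▸ ha')
      rw [h2.2] at this
      exact absurd this (by decide)
    · obtain ⟨ha, hb, hc⟩ := key y2 h2.2
      obtain ⟨ha', _, _⟩ := key y1 h1.2
      have := hc y1 hlt (heq ▸ ha')
      rw [h1.2] at this
      exact absurd this (by decide)
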